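/- For any subset Y of ℕ^ℕ, the set maxfin(Y) is dominating if, and only if, there exists a natural number k such that Y is k-dominating. -/

import Mathlib

open Filter

/-- `f ≤* g`: `f n ≤ g n` for all but finitely many `n`. -/
def EvLE (f g : ℕ → ℕ) : Prop := ∀ᶠ n in atTop, f n ≤ g n

/-- A subset of the Baire space is dominating if every function is
eventually dominated by a member of it. -/
def Dominating (Y : Set (ℕ → ℕ)) : Prop := ∀ g : ℕ → ℕ, ∃ f ∈ Y, EvLE g f

/-- A subset of the Baire space is bounded (w.r.t. `≤*`) if some single
function eventually dominates all its members. -/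
def BoundedStar (Y : Set (ℕ → ℕ)) : Prop := ∃ g : ℕ → ℕ, ∀ f ∈ Y, EvLE f g

/-- `maxfin Y`: pointwise maxima of nonempty finite subsets of `Y`. -/
def maxfin (Y : Set (ℕ → ℕ)) : Set (ℕ → ℕ) :=
  {g | ∃ F : Finset (ℕ → ℕ), F.Nonempty ∧ ↑F ⊆ Y ∧ g = fun n => F.sup (fun f => f n)}

/-- `Y` is `k`-dominating: for each `f` there are `g_1, …, g_k ∈ Y` whose
pointwise maximum eventually dominates `f`. -/
def KDominating (Y : Set (ℕ → ℕ)) (k : ℕ) : Prop :=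
  ∀ f : ℕ → ℕ, ∃ g : Fin k → (ℕ → ℕ), (∀ i, g i ∈ Y) ∧
    ∀ᶠ n in atTop, f n ≤ Finset.univ.sup (fun i => g i n)

/-- An open cover of a topological space. -/
def IsOpenCover {α : Type*} [TopologicalSpace α] (𝒰 : Set (Set α)) : Prop :=
  (∀ u ∈ 𝒰, IsOpen u) ∧ ⋃₀ 𝒰 = Set.univ

/-- An ω-cover: a cover such that every finite subset of the space is
contained in some member. -/
def IsOmegaCover {α : Type*} (𝒱 : Set (Set α)) : Prop :=
  ⋃₀ 𝒱 = Set.univ ∧ ∀ F : Set α, F.Finite → ∃ V ∈ 𝒱, F ⊆ V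

/-- A γ-cover: an infinite cover such that every point belongs to all but
finitely many members. -/
def IsGammaCover {α : Type*} (𝒱 : Set (Set α)) : Prop :=
  ⋃₀ 𝒱 = Set.univ ∧ 𝒱.Infinite ∧ ∀ x : α, {V ∈ 𝒱 | x ∉ V}.Finite

/-- A set of reals is zero-dimensional: its subspace topology has a base of
clopen sets. -/
def ZeroDimensionalSet (X : Set ℝ) : Prop :=
  ∃ B : Set (Set ↥X), TopologicalSpace.IsTopologicalBasis B ∧ ∀ b ∈ B, IsClopen b

/-- The Menger property `Ufin(O,O)`. -/
def MengerProp (α : Type*) [TopologicalSpace α] : Prop :=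
  ∀ 𝒰 : ℕ → Set (Set α), (∀ n, (𝒰 n).Countable ∧ IsOpenCover (𝒰 n)) →
    ∃ ℱ : ℕ → Set (Set α), (∀ n, (ℱ n).Finite ∧ ℱ n ⊆ 𝒰 n) ∧
      (⋃ n, ⋃₀ ℱ n) = Set.univ

/-- The Hurewicz property `Ufin(O,Γ)`. -/
def HurewiczProp (α : Type*) [TopologicalSpace α] : Prop :=
  ∀ 𝒰 : ℕ → Set (Set α), (∀ n, (𝒰 n).Countable ∧ IsOpenCover (𝒰 n)) →
    ∃ ℱ : ℕ → Set (Set α), (∀ n, (ℱ n).Finite ∧ ℱ n ⊆ 𝒰 n) ∧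
      ((∃ n, ⋃₀ ℱ n = Set.univ) ∨ IsGammaCover {s | ∃ n, s = ⋃₀ ℱ n})

/-- The property `Ufin(O,Ω)`. -/
def UfinOOmega (α : Type*) [TopologicalSpace α] : Prop :=
  ∀ 𝒰 : ℕ → Set (Set α), (∀ n, (𝒰 n).Countable ∧ IsOpenCover (𝒰 n)) →
    ∃ ℱ : ℕ → Set (Set α), (∀ n, (ℱ n).Finite ∧ ℱ n ⊆ 𝒰 n) ∧
      ((∃ n, ⋃₀ ℱ n = Set.univ) ∨ IsOmegaCover {s | ∃ n, s = ⋃₀ ℱ n})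

/-- `maxfin Y` is dominating iff `Y` is `k`-dominating for some natural
number `k`. -/
theorem maxfin_dominating_iff_kDominating (Y : Set (ℕ → ℕ)) :
    Dominating (maxfin Y) ↔ ∃ k : ℕ, KDominating Y k := by
  constructor
  · intro hD
    by_contra hk
    push_neg at hk
    have hch : ∀ k, ∃ f : ℕ → ℕ, ∀ g : Fin k → (ℕ → ℕ), (∀ i, g i ∈ Y) →
        ¬ ∀ᶠ n in atTop, f n ≤ Finset.univ.sup (fun i => g i n) := by
      intro k
      have h := hk k
      unfold KDominating at h
      push_neg at h
      obtain ⟨f, hf⟩ := h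
      exact ⟨f, fun g hg => Filter.not_eventually.mpr ((hf g hg).mono fun n hn => not_le.mpr hn)⟩
    choose f hf using hch
    set F : ℕ → ℕ := fun n => (Finset.range (n+1)).sup (fun k => f k n) with hF
    obtain ⟨h, hhY, hFh⟩ := hD F
    obtain ⟨S, hSne, hSY, rfl⟩ := hhY
    set c := S.card with hc
    set g : Fin c → (ℕ → ℕ) := fun i => (S.equivFin.symm i : ℕ → ℕ) with hg
    have hgY : ∀ i, g i ∈ Y := fun i => hSY (S.equivFin.symm i).2
    apply hf c g hgY
    have h1 : ∀ᶠ n in atTop, f c n ≤ F n := by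
      filter_upwards [eventually_ge_atTop c] with n hn
      exact Finset.le_sup (f := fun k => f k n) (Finset.mem_range.2 (Nat.lt_succ_of_le hn))
    filter_upwards [h1, hFh] with n h1 h2
    refine le_trans (le_trans h1 h2) ?_
    apply Finset.sup_le
    intro x hx
    have hex : ∃ i, g i = x := ⟨S.equivFin ⟨x, hx⟩, by simp [hg]⟩
    obtain ⟨i, rfl⟩ := hex
    exact Finset.le_sup (f := fun i => g i n) (Finset.mem_univ i)
  · rintro ⟨k, hK⟩
    intro gg
    obtain ⟨g, hgY, hev⟩ := hK gg
    rcases Nat.eq_zero_or_pos k with rfl | hkpos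
    · exfalso
      obtain ⟨g', _, hev'⟩ := hK (fun _ => 1)
      simp at hev'
      obtain ⟨a, ha⟩ := hev'
      exact lt_irrefl a (ha a)
    · classical
      haveI : Nonempty (Fin k) := Fin.pos_iff_nonempty.mp hkpos
      refine ⟨fun n => (Finset.univ.image g).sup (fun f => f n),
        ⟨Finset.univ.image g, Finset.univ_nonempty.image g, ?_, rfl⟩, ?_⟩
      · intro x hx
        simp only [Finset.coe_image, Set.mem_image] at hx
        obtain ⟨i, _, rfl⟩ := hx
        exact hgY i
      · filter_upwards [hev] with n hn
        refine hn.trans ?_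
        apply Finset.sup_le
        intro i _
        exact Finset.le_sup (f := fun (h : ℕ → ℕ) => h n) (Finset.mem_image_of_mem _ (Finset.mem_univ i))
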